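/- Let {ξ, A, ξ×A} be an orthonormal basis of ℝ³, let ψ : ℝ → ℝ and g : ℝ² → ℝ be C¹ functions, let c > 0 and μ ≠ 0, and define the vector field W(t,x) := ξ · ψ(c(x·ξ + μt)) · g(c(x·A), c(x·(ξ×A))). Then for all (t,x), div(W ⊗ W)(t,x) = μ⁻¹ ∂_t( ψ(c(x·ξ + μt))² g(c(x·A), c(x·(ξ×A)))² ) · ξ; that is, the divergence of the stress W⊗W equals μ⁻¹ times the time derivative of |W|² in the direction ξ. -/

import Mathlib

open MeasureTheory Real
open scoped ENNReal NNReal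

noncomputable section

abbrev R3 := Fin 3 → ℝ
abbrev Z3 := Fin 3 → ℤ

def cube : Set R3 := Set.univ.pi fun _ => Set.Icc 0 (2 * π)

def μT3 : Measure R3 := volume.restrict cube

def Periodic3 {α : Type*} (u : R3 → α) : Prop :=
  ∀ (x : R3) (k : Z3), u (fun i => x i + 2 * π * (k i)) = u x

def dotZ (n : Z3) (x : R3) : ℝ := ∑ i, (n i : ℝ) * x i

def eZ (n : Z3) (x : R3) : ℂ := Complex.exp (Complex.I * (dotZ n x : ℂ))

def fCoeff (u : R3 → ℂ) (n : Z3) : ℂ :=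
  (1 / (2 * π) ^ 3 : ℝ) • ∫ y in cube, Complex.exp (-(Complex.I * (dotZ n y : ℂ))) * u y

def normZsq (n : Z3) : ℝ := ∑ i, (n i : ℝ) ^ 2

def pd {E : Type*} [NormedAddCommGroup E] [NormedSpace ℝ E] (i : Fin 3) (h : R3 → E) :
    R3 → E :=
  fun x => fderiv ℝ h x (Pi.single i 1)

def cross (u v : R3) : R3 :=
  ![u 1 * v 2 - u 2 * v 1, u 2 * v 0 - u 0 * v 2, u 0 * v 1 - u 1 * v 0]

/-- The intermittent-jet type field
`W(t,x) = ξ · ψ(c(x·ξ + μt)) · g(c(x·A), c(x·(ξ×A)))`. -/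
def jetW (ψ : ℝ → ℝ) (g : ℝ × ℝ → ℝ) (c μ : ℝ) (ξ A : R3) (t : ℝ) (x : R3) : R3 :=
  (ψ (c * ((∑ i, x i * ξ i) + μ * t))
      * g (c * ∑ i, x i * A i, c * ∑ i, x i * cross ξ A i)) • ξ

def dotCLM (v : R3) : R3 →L[ℝ] ℝ :=
  ∑ i, v i • (ContinuousLinearMap.proj i : R3 →L[ℝ] ℝ)

lemma dotCLM_apply (v x : R3) : dotCLM v x = ∑ i, x i * v i := by
  simp [dotCLM, mul_comm]

lemma hasFDerivAt_dot (v x : R3) :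
    HasFDerivAt (fun y : R3 => ∑ i, y i * v i) (dotCLM v) x := by
  have h : (fun y : R3 => ∑ i, y i * v i) = ⇑(dotCLM v) :=
    funext fun y => (dotCLM_apply v y).symm
  rw [h]; exact (dotCLM v).hasFDerivAt

lemma dotCLM_single (v : R3) (j : Fin 3) : dotCLM v (Pi.single j 1) = v j := by
  rw [dotCLM_apply]; simp [Pi.single_apply]

def jetF (ψ : ℝ → ℝ) (g : ℝ × ℝ → ℝ) (c μ : ℝ) (ξ A : R3) (t : ℝ) (y : R3) : ℝ :=
  ψ (c * ((∑ i, y i * ξ i) + μ * t)) * g (c * ∑ i, y i * A i, c * ∑ i, y i * cross ξ A i)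

lemma jetW_apply (ψ : ℝ → ℝ) (g : ℝ × ℝ → ℝ) (c μ : ℝ) (ξ A : R3) (t : ℝ) (x : R3)
    (i : Fin 3) : jetW ψ g c μ ξ A t x i = jetF ψ g c μ ξ A t x * ξ i := rfl

/-- `div(W ⊗ W) = μ⁻¹ ∂_t(ψ² g²) ξ`: the divergence of the stress `W ⊗ W` equals `μ⁻¹`
times the time derivative of `|W|²` in the direction `ξ`. -/
theorem div_of_jet_stress
    (ξ A : R3) (hξ : ∑ i, ξ i ^ 2 = 1) (hA : ∑ i, A i ^ 2 = 1)
    (horth : ∑ i, ξ i * A i = 0)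
    (ψ : ℝ → ℝ) (g : ℝ × ℝ → ℝ) (hψ : ContDiff ℝ 1 ψ) (hg : ContDiff ℝ 1 g)
    (c μ : ℝ) (hc : 0 < c) (hμ : μ ≠ 0) :
    ∀ (t : ℝ) (x : R3) (i : Fin 3),
      (∑ j, pd j (fun y => jetW ψ g c μ ξ A t y i * jetW ψ g c μ ξ A t y j) x)
        = μ⁻¹ * deriv (fun s : ℝ =>
              ψ (c * ((∑ i', x i' * ξ i') + μ * s)) ^ 2
                * g (c * ∑ i', x i' * A i', c * ∑ i', x i' * cross ξ A i') ^ 2) t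
            * ξ i := by
  intro t x i
  simp only [jetW_apply]
  set B : R3 := cross ξ A with hBdef
  have hξB : ∑ j, ξ j * B j = 0 := by
    simp only [hBdef, cross, Fin.sum_univ_three]
    simp [Matrix.cons_val_zero, Matrix.cons_val_one, Matrix.head_cons]
    ring
  set d : ℝ := ∑ i', x i' * ξ i' with hd
  set a : ℝ := c * (d + μ * t) with ha
  set pA : ℝ := c * ∑ i', x i' * A i' with hpA
  set pB : ℝ := c * ∑ i', x i' * B i' with hpB
  set p : ℝ × ℝ := (pA, pB) with hp
  -- pointwise derivatives of ψ and g
  have hψd : HasDerivAt ψ (deriv ψ a) a :=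
    ((hψ.differentiable one_ne_zero) a).hasDerivAt
  have hgd : HasFDerivAt g (fderiv ℝ g p) p :=
    ((hg.differentiable one_ne_zero) p).hasFDerivAt
  set G1 : ℝ := fderiv ℝ g p (1, 0) with hG1
  set G2 : ℝ := fderiv ℝ g p (0, 1) with hG2
  have hDg : ∀ u v : ℝ, fderiv ℝ g p (u, v) = u * G1 + v * G2 := by
    intro u v
    have huv : ((u, v) : ℝ × ℝ) = u • ((1:ℝ), (0:ℝ)) + v • ((0:ℝ), (1:ℝ)) := by
      simp [Prod.ext_iff]
    rw [huv, map_add, _root_.map_smul, _root_.map_smul, smul_eq_mul, smul_eq_mul, hG1, hG2]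
  -- spatial derivative of jetF
  have hL1 : HasFDerivAt (fun y : R3 => c * ((∑ i', y i' * ξ i') + μ * t))
      (c • dotCLM ξ) x := ((hasFDerivAt_dot ξ x).add_const (μ * t)).const_mul c
  have hψc : HasFDerivAt (fun y : R3 => ψ (c * ((∑ i', y i' * ξ i') + μ * t)))
      (deriv ψ a • (c • dotCLM ξ)) x := hψd.comp_hasFDerivAt x hL1
  have hM : HasFDerivAt
      (fun y : R3 => ((c * ∑ i', y i' * A i', c * ∑ i', y i' * B i') : ℝ × ℝ))
      ((c • dotCLM A).prod (c • dotCLM B)) x :=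
    HasFDerivAt.prodMk (((hasFDerivAt_dot A x).const_mul c)) (((hasFDerivAt_dot B x).const_mul c))
  have hgc : HasFDerivAt (fun y : R3 => g (c * ∑ i', y i' * A i', c * ∑ i', y i' * B i'))
      ((fderiv ℝ g p).comp ((c • dotCLM A).prod (c • dotCLM B))) x := hgd.comp x hM
  set F' : R3 →L[ℝ] ℝ :=
    ψ a • ((fderiv ℝ g p).comp ((c • dotCLM A).prod (c • dotCLM B)))
      + g p • (deriv ψ a • (c • dotCLM ξ)) with hF'
  have hF : HasFDerivAt (jetF ψ g c μ ξ A t) F' x := hψc.mul hgc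
  have hF'single : ∀ j : Fin 3,
      F' (Pi.single j 1)
        = ψ a * (c * A j * G1 + c * B j * G2) + g p * (deriv ψ a * (c * ξ j)) := by
    intro j
    rw [hF']
    simp only [ContinuousLinearMap.add_apply, ContinuousLinearMap.coe_smul',
      Pi.smul_apply, ContinuousLinearMap.comp_apply, ContinuousLinearMap.prod_apply,
      dotCLM_single, smul_eq_mul]
    rw [hDg]
  have hprod : ∀ j : Fin 3,
      HasFDerivAt (fun y => jetF ψ g c μ ξ A t y * ξ i * (jetF ψ g c μ ξ A t y * ξ j))
        ((jetF ψ g c μ ξ A t x * ξ i) • (ξ j • F')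
          + (jetF ψ g c μ ξ A t x * ξ j) • (ξ i • F')) x :=
    fun j => (hF.mul_const (ξ i)).mul (hF.mul_const (ξ j))
  have hFx : jetF ψ g c μ ξ A t x = ψ a * g p := rfl
  have hpdj : ∀ j : Fin 3,
      pd j (fun y => jetF ψ g c μ ξ A t y * ξ i * (jetF ψ g c μ ξ A t y * ξ j)) x
        = (ξ j * A j) * (2 * (ψ a * g p) * ξ i * (ψ a * c * G1))
          + ((ξ j * B j) * (2 * (ψ a * g p) * ξ i * (ψ a * c * G2))
            + (ξ j ^ 2) * (2 * (ψ a * g p) * ξ i * (g p * deriv ψ a * c))) := by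
    intro j
    simp only [pd]
    rw [(hprod j).fderiv]
    simp only [ContinuousLinearMap.add_apply, ContinuousLinearMap.coe_smul',
      Pi.smul_apply, smul_eq_mul]
    rw [hF'single j, hFx]
    ring
  -- compute the sum
  have hLHS :
      (∑ j, pd j (fun y => jetF ψ g c μ ξ A t y * ξ i * (jetF ψ g c μ ξ A t y * ξ j)) x)
        = 2 * (ψ a * g p) * ξ i * (g p * deriv ψ a * c) := by
    rw [Finset.sum_congr rfl fun j _ => hpdj j]
    rw [Finset.sum_add_distrib, Finset.sum_add_distrib,
      ← Finset.sum_mul, ← Finset.sum_mul, ← Finset.sum_mul, horth, hξB, hξ]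
    ring
  -- time derivative
  have hin : HasDerivAt (fun s : ℝ => c * (d + μ * s)) (c * μ) t := by
    have h1 : HasDerivAt (fun s : ℝ => d + μ * s) μ t := by
      simpa using ((hasDerivAt_id t).const_mul μ).const_add d
    simpa using h1.const_mul c
  have hψt : HasDerivAt (fun s : ℝ => ψ (c * (d + μ * s))) (deriv ψ a * (c * μ)) t :=
    hψd.comp t hin
  have hsq : HasDerivAt (fun s : ℝ => ψ (c * (d + μ * s)) ^ 2 * g p ^ 2)
      (2 * ψ a * (deriv ψ a * (c * μ)) * g p ^ 2) t := by
    have h2 := (hψt.pow 2).mul_const (g p ^ 2)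
    have : ψ (c * (d + μ * t)) = ψ a := by rw [← ha]
    simpa [this] using h2
  rw [hLHS, hsq.deriv]
  field_simp
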